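/- Let p, q be primes with q dividing (p^p-1)/(p-1), and let M in GL_p(F_p) have order q. Then the matrix M - I is invertible. -/

import Mathlib

open MulAction Matrix

set_option synthInstance.maxHeartbeats 1000000 in
set_option maxHeartbeats 1000000 in
instance glAction (n : ℕ) : MulAction (GL (Fin n) (ZMod n)) (Fin n → ZMod n) where
  smul g v := (g : Matrix (Fin n) (Fin n) (ZMod n)) *ᵥ v
  one_smul v := Matrix.one_mulVec v
  mul_smul g h v := (Matrix.mulVec_mulVec v _ _).symm

set_option synthInstance.maxHeartbeats 1000000 in
set_option maxHeartbeats 1000000 in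
theorem stmt_5 (p q : ℕ) (hp : p.Prime) (hq : q.Prime)
    (hdvd : q ∣ ∑ i ∈ Finset.range p, p ^ i)
    (M : GL (Fin p) (ZMod p)) (hM : orderOf M = q) :
    IsUnit ((M : Matrix (Fin p) (Fin p) (ZMod p)) - 1) := by
  haveI : Fact p.Prime := ⟨hp⟩
  haveI : Fact q.Prime := ⟨hq⟩
  set A : Matrix (Fin p) (Fin p) (ZMod p) := (M : Matrix (Fin p) (Fin p) (ZMod p)) with hA
  -- order of p mod q
  have h0 : ((∑ i ∈ Finset.range p, p ^ i : ℕ) : ZMod q) = 0 :=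
    (ZMod.natCast_eq_zero_iff _ _).mpr hdvd
  push_cast at h0
  have hx : ((p : ZMod q)) ^ p = 1 := by
    have := geom_sum_mul (p : ZMod q) p
    rw [h0, zero_mul] at this
    exact sub_eq_zero.mp this.symm
  have hord : orderOf ((p : ZMod q)) = p := by
    have hdvd' := orderOf_dvd_of_pow_eq_one hx
    rcases (Nat.Prime.eq_one_or_self_of_dvd hp _ hdvd') with h1 | h
    · exfalso
      have hp1 : (p : ZMod q) = 1 := orderOf_eq_one_iff.mp h1
      rw [hp1] at h0
      simp at h0
      rw [hp1] at h0
      exact one_ne_zero h0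
    · exact h
  -- the subgroup generated by M is a q-group
  have hcard : Nat.card (Subgroup.zpowers M) = q ^ 1 := by
    rw [Nat.card_zpowers, hM, pow_one]
  have hpgroup : IsPGroup q (Subgroup.zpowers M) := IsPGroup.of_card hcard
  -- counting
  have hmodeq := hpgroup.card_modEq_card_fixedPoints (Fin p → ZMod p)
  -- fixed points = kernel of (A - 1)
  set B := Matrix.toLin' (A - 1) with hB
  have hker : ∀ x : Fin p → ZMod p,
      x ∈ fixedPoints (Subgroup.zpowers M) (Fin p → ZMod p) ↔ x ∈ LinearMap.ker B := by
    intro x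
    have hfix : ∀ g : GL (Fin p) (ZMod p),
        g • x = (g : Matrix (Fin p) (Fin p) (ZMod p)) *ᵥ x := fun _ => rfl
    have hfix2 : (A *ᵥ x = x) ↔ x ∈ LinearMap.ker B := by
      rw [LinearMap.mem_ker, hB, Matrix.toLin'_apply, Matrix.sub_mulVec, Matrix.one_mulVec,
        sub_eq_zero]
    constructor
    · intro hfp
      have := hfp ⟨M, Subgroup.mem_zpowers M⟩
      rw [Subgroup.mk_smul, hfix] at this
      exact hfix2.mp this
    · intro hx'
      have hMx : M • x = x := by rw [hfix]; exact hfix2.mpr hx'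
      intro g
      have hle : Subgroup.zpowers M ≤ MulAction.stabilizer (GL (Fin p) (ZMod p)) x :=
        Subgroup.zpowers_le.mpr hMx
      exact hle g.2
  haveI : Fintype (LinearMap.ker B) := Fintype.ofFinite _
  have hcardfix : Nat.card (fixedPoints (Subgroup.zpowers M) (Fin p → ZMod p))
      = p ^ (Module.finrank (ZMod p) (LinearMap.ker B)) := by
    rw [Nat.card_congr (Equiv.subtypeEquivRight hker)]
    rw [Nat.card_eq_fintype_card, Module.card_eq_pow_finrank (K := ZMod p), ZMod.card]
  set d := Module.finrank (ZMod p) (LinearMap.ker B) with hd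
  have hcardall : Nat.card (Fin p → ZMod p) = p ^ p := by
    simp [Nat.card_eq_fintype_card, ZMod.card]
  rw [hcardall, hcardfix] at hmodeq
  -- deduce p ∣ d
  have hzmod : ((p : ZMod q)) ^ p = ((p : ZMod q)) ^ d := by
    have := (ZMod.natCast_eq_natCast_iff _ _ _).mpr hmodeq
    push_cast at this
    exact this
  have hxd : ((p : ZMod q)) ^ d = 1 := by rw [← hzmod, hx]
  have hpd : p ∣ d := hord ▸ orderOf_dvd_of_pow_eq_one hxd
  have hdle : d ≤ p := by
    have := Submodule.finrank_le (LinearMap.ker B)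
    simpa [Module.finrank_pi] using this
  have hdne : d ≠ p := by
    intro hdp
    have hkertop : LinearMap.ker B = ⊤ := by
      apply Submodule.eq_top_of_finrank_eq
      simp only [Module.finrank_pi, Fintype.card_fin]
      exact hdp
    have hB0 : A - 1 = 0 := by
      have hBz : B = 0 := LinearMap.ker_eq_top.mp hkertop
      exact Matrix.toLin'.map_eq_zero_iff.mp (hB ▸ hBz)
    have hA1 : A = 1 := sub_eq_zero.mp hB0
    have hM1 : M = 1 := Units.ext (by simpa [← hA] using hA1)
    rw [hM1, orderOf_one] at hM
    exact hq.one_lt.ne hM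
  have hd0 : d = 0 := Nat.eq_zero_of_dvd_of_lt hpd (lt_of_le_of_ne hdle hdne)
  have hkerbot : LinearMap.ker B = ⊥ := Submodule.finrank_eq_zero.mp hd0
  -- conclude
  apply (Matrix.isUnit_iff_isUnit_det _).mpr
  rw [isUnit_iff_ne_zero]
  intro hdet
  obtain ⟨v, hv0, hv⟩ := (Matrix.exists_mulVec_eq_zero_iff).mpr hdet
  have hvk : v ∈ LinearMap.ker B := by
    rw [LinearMap.mem_ker, hB, Matrix.toLin'_apply, hv]
  rw [hkerbot, Submodule.mem_bot] at hvk
  exact hv0 hvk
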